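/- Let X be uniformly distributed over {0,1}^n and let J be a random variable taking values in {0,1,...,n} (possibly correlated with X). Then H(X[1..J] | X[J+1..n]) ≥ E[J] − H(J). -/

import Mathlib

open Finset Real
open scoped Classical

/-- Probability of an event under a weight function on a finite sample space. -/
noncomputable def pr {Ω : Type*} [Fintype Ω] (μ : Ω → ℝ) (E : Ω → Prop) : ℝ :=
  ∑ ω, if E ω then μ ω else 0

/-- Shannon entropy (base 2) of a random variable on a finite probability space. -/
noncomputable def ent {Ω α : Type*} [Fintype Ω] [Fintype α]
    (μ : Ω → ℝ) (X : Ω → α) : ℝ :=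
  -∑ a : α, pr μ (fun ω => X ω = a) * Real.logb 2 (pr μ (fun ω => X ω = a))

/-- Conditional Shannon entropy H(X | Y) (base 2). -/
noncomputable def condEnt {Ω α β : Type*} [Fintype Ω] [Fintype α] [Fintype β]
    (μ : Ω → ℝ) (X : Ω → α) (Y : Ω → β) : ℝ :=
  -∑ a : α, ∑ b : β,
    pr μ (fun ω => X ω = a ∧ Y ω = b) *
      Real.logb 2 (pr μ (fun ω => X ω = a ∧ Y ω = b) / pr μ (fun ω => Y ω = b))

/-- Conditional mutual information I(X : Y | Z) = H(X|Z) - H(X|Y,Z). -/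
noncomputable def condMI {Ω α β γ : Type*} [Fintype Ω] [Fintype α] [Fintype β] [Fintype γ]
    (μ : Ω → ℝ) (X : Ω → α) (Y : Ω → β) (Z : Ω → γ) : ℝ :=
  condEnt μ X Z - condEnt μ X (fun ω => (Y ω, Z ω))

/-- Mutual information I(X : Y) = H(X) - H(X|Y). -/
noncomputable def mutInf {Ω α β : Type*} [Fintype Ω] [Fintype α] [Fintype β]
    (μ : Ω → ℝ) (X : Ω → α) (Y : Ω → β) : ℝ :=
  ent μ X - condEnt μ X Y

/-- Binary entropy function (base 2). -/
noncomputable def H2 (x : ℝ) : ℝ := -x * Real.logb 2 x - (1 - x) * Real.logb 2 (1 - x)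

/-- The prefix X[1..j] of a length-`n` bit string, encoded with `none` outside the prefix. -/
def prefOf {n : ℕ} (x : Fin n → Bool) (j : Fin (n+1)) : Fin n → Option Bool :=
  fun i => if (i : ℕ) < (j : ℕ) then some (x i) else none

/-- The suffix X[j+1..n] of a length-`n` bit string, encoded with `none` inside the prefix. -/
def suffOf {n : ℕ} (x : Fin n → Bool) (j : Fin (n+1)) : Fin n → Option Bool :=
  fun i => if (j : ℕ) ≤ (i : ℕ) then some (x i) else none

lemma sum_pr_mul {Ω α : Type*} [Fintype Ω] [Fintype α] (μ : Ω → ℝ) (Y : Ω → α) (c : α → ℝ) :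
    ∑ a, pr μ (fun ω => Y ω = a) * c a = ∑ ω, μ ω * c (Y ω) := by
  unfold pr
  simp only [Finset.sum_mul, ite_mul, zero_mul]
  rw [Finset.sum_comm]
  refine Finset.sum_congr rfl fun ω _ => ?_
  simp [eq_comm]

lemma pr_nonneg {Ω : Type*} [Fintype Ω] {μ : Ω → ℝ} (hpos : ∀ ω, 0 ≤ μ ω) (E : Ω → Prop) :
    0 ≤ pr μ E := by
  apply Finset.sum_nonneg; intro ω _; split <;> simp [hpos ω]

lemma pr_mono {Ω : Type*} [Fintype Ω] {μ : Ω → ℝ} (hpos : ∀ ω, 0 ≤ μ ω) {E F : Ω → Prop}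
    (h : ∀ ω, E ω → F ω) : pr μ E ≤ pr μ F := by
  apply Finset.sum_le_sum; intro ω _
  by_cases hE : E ω
  · simp [hE, h ω hE]
  · simp only [hE, if_false]; split <;> simp [hpos ω]

lemma le_pr {Ω : Type*} [Fintype Ω] {μ : Ω → ℝ} (hpos : ∀ ω, 0 ≤ μ ω) {E : Ω → Prop}
    {ω : Ω} (hE : E ω) : μ ω ≤ pr μ E := by
  have := Finset.single_le_sum (f := fun ω' => if E ω' then μ ω' else 0)
    (fun i _ => by split <;> simp [hpos i]) (Finset.mem_univ ω)
  simpa [hE, pr] using this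

lemma pr_congr {Ω : Type*} [Fintype Ω] (μ : Ω → ℝ) {E F : Ω → Prop}
    (h : ∀ ω, E ω ↔ F ω) : pr μ E = pr μ F := by
  unfold pr; exact Finset.sum_congr rfl fun ω _ => by rw [h ω]

lemma sum_pr_eq_one {Ω α : Type*} [Fintype Ω] [Fintype α] {μ : Ω → ℝ}
    (hsum : ∑ ω, μ ω = 1) (Y : Ω → α) :
    ∑ a, pr μ (fun ω => Y ω = a) = 1 := by
  have := sum_pr_mul μ Y (fun _ => 1)
  simpa [hsum] using this

def recon {n : ℕ} (a b : Fin n → Option Bool) : Fin n → Bool :=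
  fun i => (a i).getD ((b i).getD false)

lemma recon_eq {n : ℕ} (x : Fin n → Bool) (j : Fin (n+1)) :
    recon (prefOf x j) (suffOf x j) = x := by
  funext i
  by_cases h : (i : ℕ) < (j : ℕ) <;>
    simp [recon, prefOf, suffOf, h, Nat.le_of_not_lt]

lemma card_suff_ge {n : ℕ} (j : Fin (n+1)) (x : Fin n → Bool) :
    (2:ℕ)^(j:ℕ) ≤ (Finset.univ.filter
      fun y : Fin n → Bool => suffOf y j = suffOf x j).card := by
  have hinj : ∀ f ∈ (Finset.univ : Finset (Fin (j:ℕ) → Bool)),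
      (fun i : Fin n => if h : (i:ℕ) < (j:ℕ) then f ⟨i, h⟩ else x i) ∈
        (Finset.univ.filter fun y : Fin n → Bool => suffOf y j = suffOf x j) := by
    intro f _
    simp only [Finset.mem_filter, Finset.mem_univ, true_and]
    funext i
    by_cases h : (j:ℕ) ≤ (i:ℕ)
    · simp [suffOf, h, Nat.not_lt_of_le h]
    · simp [suffOf, h]
  have := Finset.card_le_card_of_injOn
    (f := fun (f : Fin (j:ℕ) → Bool) => (fun i : Fin n => if h : (i:ℕ) < (j:ℕ) then f ⟨i, h⟩ else x i))
    hinj ?_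
  · calc (2:ℕ)^(j:ℕ) = (Finset.univ : Finset (Fin (j:ℕ) → Bool)).card := by
          simp [Fintype.card_fun]
    _ ≤ _ := this
  · intro f _ g _ hfg
    funext k
    have hk : (k:ℕ) < n := lt_of_lt_of_le k.2 (Nat.lt_succ_iff.mp j.2)
    have := congrFun hfg ⟨(k:ℕ), hk⟩
    simpa [k.2] using this

lemma pr_suff_ge {Ω : Type*} [Fintype Ω] {n : ℕ} {μ : Ω → ℝ}
    (X : Ω → Fin n → Bool)
    (hX : ∀ x : Fin n → Bool, pr μ (fun ω => X ω = x) = 1 / 2 ^ n)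
    (j : Fin (n+1)) (x : Fin n → Bool) :
    (2:ℝ)^(j:ℕ) / 2^n ≤ pr μ (fun ω => suffOf (X ω) j = suffOf x j) := by
  have h1 : pr μ (fun ω => suffOf (X ω) j = suffOf x j)
      = ∑ y : Fin n → Bool, pr μ (fun ω => X ω = y) *
          (if suffOf y j = suffOf x j then 1 else 0) := by
    rw [sum_pr_mul μ X (fun y => if suffOf y j = suffOf x j then 1 else 0)]
    unfold pr
    refine Finset.sum_congr rfl fun ω _ => ?_
    by_cases h : suffOf (X ω) j = suffOf x j <;> simp [h]
  rw [h1]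
  have h2 : ∀ y : Fin n → Bool, pr μ (fun ω => X ω = y) *
      (if suffOf y j = suffOf x j then 1 else 0)
      = if suffOf y j = suffOf x j then (1:ℝ)/2^n else 0 := by
    intro y; by_cases h : suffOf y j = suffOf x j <;> simp [h, hX y]
  simp only [h2]
  rw [Finset.sum_ite, Finset.sum_const_zero, add_zero, Finset.sum_const, nsmul_eq_mul]
  have hcard := card_suff_ge j x
  have hc : ((2:ℕ)^(j:ℕ) : ℝ) ≤ ((Finset.univ.filter
      fun y : Fin n → Bool => suffOf y j = suffOf x j).card : ℝ) := by
    exact_mod_cast hcard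
  calc (2:ℝ)^(j:ℕ)/2^n = ((2:ℕ)^(j:ℕ) : ℝ) * (1/2^n) := by push_cast; ring
    _ ≤ _ := mul_le_mul_of_nonneg_right hc (by positivity)

theorem stmt1 {Ω : Type*} [Fintype Ω] (n : ℕ) (μ : Ω → ℝ)
    (hpos : ∀ ω, 0 ≤ μ ω) (hsum : ∑ ω, μ ω = 1)
    (X : Ω → Fin n → Bool) (J : Ω → Fin (n+1))
    (hX : ∀ x : Fin n → Bool, pr μ (fun ω => X ω = x) = 1 / 2 ^ n) :
    condEnt μ (fun ω => prefOf (X ω) (J ω)) (fun ω => suffOf (X ω) (J ω))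
      ≥ (∑ ω, μ ω * ((J ω : ℕ) : ℝ)) - ent μ J := by
  classical
  set P : Ω → (Fin n → Option Bool) := fun ω => prefOf (X ω) (J ω) with hP
  set S : Ω → (Fin n → Option Bool) := fun ω => suffOf (X ω) (J ω) with hS
  set pJ : Fin (n+1) → ℝ := fun j => pr μ (fun ω => J ω = j) with hpJ
  have hpJ_nonneg : ∀ j, 0 ≤ pJ j := fun j => pr_nonneg hpos _
  set cPS : (Fin n → Option Bool) × (Fin n → Option Bool) → ℝ :=
    fun p => Real.logb 2 (pr μ (fun ω => P ω = p.1 ∧ S ω = p.2) /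
      pr μ (fun ω => S ω = p.2)) with hcPS
  -- Step 1: rewrite condEnt as a sum over ω
  have hcond : condEnt μ P S = -∑ ω, μ ω * cPS (P ω, S ω) := by
    have e1 : condEnt μ P S
        = -∑ p : (Fin n → Option Bool) × (Fin n → Option Bool),
            pr μ (fun ω => (P ω, S ω) = p) * cPS p := by
      unfold condEnt
      rw [Fintype.sum_prod_type]
      congr 1
      refine Finset.sum_congr rfl fun a _ => Finset.sum_congr rfl fun b _ => ?_
      rw [pr_congr μ (E := fun ω => (P ω, S ω) = (a, b))
        (F := fun ω => P ω = a ∧ S ω = b) (fun ω => by simp [Prod.ext_iff])]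
    rw [e1, sum_pr_mul μ (fun ω => (P ω, S ω)) cPS]
  -- Step 2: rewrite ent as a sum over ω
  have hent : ent μ J = -∑ ω, μ ω * Real.logb 2 (pJ (J ω)) := by
    unfold ent
    rw [sum_pr_mul μ J (fun j => Real.logb 2 (pJ j))]
  -- the key quantity
  set t : Ω → ℝ := fun ω => 2 ^ ((J ω : ℕ)) * pJ (J ω) *
    (pr μ (fun ω' => P ω' = P ω ∧ S ω' = S ω) / pr μ (fun ω' => S ω' = S ω)) with ht
  have hlog2 : (0:ℝ) < Real.log 2 := Real.log_pos (by norm_num)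
  -- Claim A: pointwise log bound
  have claimA : ∀ ω, μ ω * (((J ω : ℕ) : ℝ) + Real.logb 2 (pJ (J ω)) + cPS (P ω, S ω))
      ≤ μ ω * ((t ω - 1) / Real.log 2) := by
    intro ω
    rcases eq_or_lt_of_le (hpos ω) with h0 | h0
    · rw [← h0]; simp
    · refine mul_le_mul_of_nonneg_left ?_ (hpos ω)
      have hJpos : 0 < pJ (J ω) := lt_of_lt_of_le h0 (le_pr hpos rfl)
      have hPSpos : 0 < pr μ (fun ω' => P ω' = P ω ∧ S ω' = S ω) :=
        lt_of_lt_of_le h0 (le_pr hpos ⟨rfl, rfl⟩)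
      have hSpos : 0 < pr μ (fun ω' => S ω' = S ω) :=
        lt_of_lt_of_le h0 (le_pr hpos rfl)
      have htpos : 0 < t ω := by
        rw [ht]
        exact mul_pos (mul_pos (by positivity) hJpos) (div_pos hPSpos hSpos)
      have hlogt : ((J ω : ℕ) : ℝ) + Real.logb 2 (pJ (J ω)) + cPS (P ω, S ω)
          = Real.logb 2 (t ω) := by
        show _ = Real.logb 2 (2 ^ ((J ω : ℕ)) * pJ (J ω) *
          (pr μ (fun ω' => P ω' = P ω ∧ S ω' = S ω) / pr μ (fun ω' => S ω' = S ω)))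
        rw [Real.logb_mul (by positivity) (ne_of_gt (div_pos hPSpos hSpos)),
            Real.logb_mul (by positivity) (ne_of_gt hJpos),
            Real.logb_pow, Real.logb_self_eq_one (by norm_num)]
        show _ = ((J ω : ℕ) : ℝ) * 1 + Real.logb 2 (pJ (J ω)) + cPS (P ω, S ω)
        ring
      rw [hlogt, Real.logb]
      exact (div_le_div_iff_of_pos_right hlog2).mpr (Real.log_le_sub_one_of_pos htpos)
  -- Claim B: the expected value of t is at most 1
  set q : (Fin n → Option Bool) × Fin (n+1) → ℝ := fun p =>
    2 ^ ((p.2 : ℕ)) / 2 ^ n * pJ p.2 / pr μ (fun ω => (S ω, J ω) = p) with hq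
  have hB1 : ∀ ω, μ ω * t ω ≤ μ ω * q (S ω, J ω) := by
    intro ω
    rcases eq_or_lt_of_le (hpos ω) with h0 | h0
    · rw [← h0]; simp
    · refine mul_le_mul_of_nonneg_left ?_ (hpos ω)
      have hSJpos : 0 < pr μ (fun ω' => (S ω', J ω') = (S ω, J ω)) :=
        lt_of_lt_of_le h0 (le_pr hpos rfl)
      have hSJ_le_S : pr μ (fun ω' => (S ω', J ω') = (S ω, J ω))
          ≤ pr μ (fun ω' => S ω' = S ω) :=
        pr_mono hpos (fun ω' h => (Prod.ext_iff.mp h).1)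
      have hPS_le : pr μ (fun ω' => P ω' = P ω ∧ S ω' = S ω) ≤ 1 / 2 ^ n := by
        have himp : ∀ ω', (P ω' = P ω ∧ S ω' = S ω) → X ω' = recon (P ω) (S ω) := by
          rintro ω' ⟨h1, h2⟩
          rw [← h1, ← h2]
          exact (recon_eq (X ω') (J ω')).symm
        calc pr μ (fun ω' => P ω' = P ω ∧ S ω' = S ω)
            ≤ pr μ (fun ω' => X ω' = recon (P ω) (S ω)) := pr_mono hpos himp
          _ = 1 / 2 ^ n := hX _
      have hdiv : pr μ (fun ω' => P ω' = P ω ∧ S ω' = S ω) / pr μ (fun ω' => S ω' = S ω)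
          ≤ (1 / 2 ^ n) / pr μ (fun ω' => (S ω', J ω') = (S ω, J ω)) :=
        div_le_div₀ (by positivity) hPS_le hSJpos hSJ_le_S
      calc t ω ≤ 2 ^ ((J ω : ℕ)) * pJ (J ω) *
            ((1 / 2 ^ n) / pr μ (fun ω' => (S ω', J ω') = (S ω, J ω))) := by
            rw [ht]
            exact mul_le_mul_of_nonneg_left hdiv
              (mul_nonneg (by positivity) (hpJ_nonneg _))
        _ = q (S ω, J ω) := by rw [hq]; field_simp
  have hB2 : ∑ ω, μ ω * q (S ω, J ω)
      = ∑ p : (Fin n → Option Bool) × Fin (n+1),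
          pr μ (fun ω => (S ω, J ω) = p) * q p :=
    (sum_pr_mul μ (fun ω => (S ω, J ω)) q).symm
  have hB3 : ∀ p : (Fin n → Option Bool) × Fin (n+1),
      pr μ (fun ω => (S ω, J ω) = p) * q p
        ≤ pJ p.2 * pr μ (fun ω => suffOf (X ω) p.2 = p.1) := by
    intro p
    by_cases hz : pr μ (fun ω => (S ω, J ω) = p) = 0
    · rw [hz, zero_mul]
      exact mul_nonneg (hpJ_nonneg _) (pr_nonneg hpos _)
    · have hL : pr μ (fun ω => (S ω, J ω) = p) * q p
          = 2 ^ ((p.2 : ℕ)) / 2 ^ n * pJ p.2 := by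
        rw [hq]
        field_simp
      rw [hL]
      obtain ⟨ω0, hω0⟩ := Finset.exists_ne_zero_of_sum_ne_zero hz
      have hev : (S ω0, J ω0) = p := by
        by_contra h
        simp [h] at hω0
      have h1 : p.1 = suffOf (X ω0) p.2 := by
        rw [← hev]
      have h2 : p.2 = J ω0 := (Prod.ext_iff.mp hev).2.symm
      have hge : (2:ℝ) ^ ((p.2 : ℕ)) / 2 ^ n
          ≤ pr μ (fun ω => suffOf (X ω) p.2 = p.1) := by
        rw [h1, h2]
        exact pr_suff_ge X hX (J ω0) (X ω0)
      calc 2 ^ ((p.2 : ℕ)) / 2 ^ n * pJ p.2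
          ≤ pr μ (fun ω => suffOf (X ω) p.2 = p.1) * pJ p.2 :=
            mul_le_mul_of_nonneg_right hge (hpJ_nonneg _)
        _ = pJ p.2 * pr μ (fun ω => suffOf (X ω) p.2 = p.1) := mul_comm _ _
  have hB4 : ∑ p : (Fin n → Option Bool) × Fin (n+1),
      pJ p.2 * pr μ (fun ω => suffOf (X ω) p.2 = p.1) = 1 := by
    rw [Fintype.sum_prod_type, Finset.sum_comm]
    have : ∀ j : Fin (n+1), ∑ b : Fin n → Option Bool,
        pJ j * pr μ (fun ω => suffOf (X ω) j = b) = pJ j := by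
      intro j
      rw [← Finset.mul_sum, sum_pr_eq_one hsum (fun ω => suffOf (X ω) j), mul_one]
    simp only [this]
    exact sum_pr_eq_one hsum J
  have hBsum : ∑ ω, μ ω * t ω ≤ 1 := by
    calc ∑ ω, μ ω * t ω ≤ ∑ ω, μ ω * q (S ω, J ω) :=
          Finset.sum_le_sum (fun ω _ => hB1 ω)
      _ = _ := hB2
      _ ≤ ∑ p : (Fin n → Option Bool) × Fin (n+1),
            pJ p.2 * pr μ (fun ω => suffOf (X ω) p.2 = p.1) :=
          Finset.sum_le_sum (fun p _ => hB3 p)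
      _ = 1 := hB4
  -- put everything together
  have hfinal : ∑ ω, μ ω * (((J ω : ℕ) : ℝ) + Real.logb 2 (pJ (J ω)) + cPS (P ω, S ω))
      ≤ 0 := by
    calc ∑ ω, μ ω * (((J ω : ℕ) : ℝ) + Real.logb 2 (pJ (J ω)) + cPS (P ω, S ω))
        ≤ ∑ ω, μ ω * ((t ω - 1) / Real.log 2) :=
          Finset.sum_le_sum (fun ω _ => claimA ω)
      _ = ((∑ ω, μ ω * t ω) - 1) / Real.log 2 := by
          have e : ∀ ω, μ ω * ((t ω - 1) / Real.log 2)
              = (μ ω * t ω - μ ω) / Real.log 2 := fun ω => by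
            rw [← mul_div_assoc, mul_sub, mul_one]
          simp only [e]
          rw [← Finset.sum_div, Finset.sum_sub_distrib, hsum]
      _ ≤ 0 := div_nonpos_of_nonpos_of_nonneg (by linarith) hlog2.le
  have hsplit : ∑ ω, μ ω * (((J ω : ℕ) : ℝ) + Real.logb 2 (pJ (J ω)) + cPS (P ω, S ω))
      = (∑ ω, μ ω * ((J ω : ℕ) : ℝ)) + (∑ ω, μ ω * Real.logb 2 (pJ (J ω)))
        + ∑ ω, μ ω * cPS (P ω, S ω) := by
    rw [← Finset.sum_add_distrib, ← Finset.sum_add_distrib]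
    exact Finset.sum_congr rfl fun ω _ => by ring
  rw [hcond, hent]
  rw [hsplit] at hfinal
  linarith
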